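/- Let g : [0,1] → ℝ be concave with g(0)=0 and η(x) = -x log x. Let k ≥ 2 be an integer. Then liminf_{n→∞} (1/n) kⁿ g(k^{-n}) = c·log k where c := liminf_{x→0⁺} g(x)/η(x), if c is finite, and equals +∞ if c = ∞. -/

import Mathlib

open Filter Set Real

/-- The Shannon entropy function. -/
noncomputable def eta (x : ℝ) : ℝ := -x * Real.log x

lemma concave_ratio {g : ℝ → ℝ} (hconc : ConcaveOn ℝ (Set.Icc 0 1) g) (h0 : g 0 = 0)
    {x y : ℝ} (hx : 0 < x) (hxy : x ≤ y) (hy : y ≤ 1) : g y / y ≤ g x / x := by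
  have hy0 : 0 < y := hx.trans_le hxy
  have h1 : (0:ℝ) ≤ 1 - x/y := by
    have : x / y ≤ 1 := (div_le_one hy0).mpr hxy
    linarith
  have h2 : (0:ℝ) ≤ x/y := by positivity
  have h3 : (1 - x/y) + x/y = 1 := by ring
  have key : (1 - x/y) • g 0 + (x/y) • g y ≤ g ((1-x/y) • (0:ℝ) + (x/y) • y) :=
    hconc.2 (Set.left_mem_Icc.mpr zero_le_one) (Set.mem_Icc.mpr ⟨hy0.le, hy⟩) h1 h2 h3
  have hxyy : (x/y) * y = x := by field_simp
  simp only [smul_eq_mul, smul_zero, zero_add, hxyy, h0, mul_zero] at key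
  rw [div_le_div_iff₀ hy0 hx]
  have h5 := mul_le_mul_of_nonneg_right key hy0.le
  have h6 : x / y * g y * y = g y * x := by field_simp
  linarith

section Main

variable {g : ℝ → ℝ} {k : ℕ}

lemma main_liminf_eq (hconc : ConcaveOn ℝ (Set.Icc 0 1) g) (h0 : g 0 = 0)
    (hk : 2 ≤ k) :
    Filter.liminf (fun x : ℝ => ((g x / eta x : ℝ) : EReal)) (nhdsWithin 0 (Set.Ioo 0 1))
      = Filter.liminf (fun n : ℕ => ((g (((k:ℝ)^n)⁻¹) / eta (((k:ℝ)^n)⁻¹) : ℝ) : EReal))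
          Filter.atTop := by
  have hk1 : (1:ℝ) < (k:ℝ) := by exact_mod_cast (by omega : 1 < k)
  have hk0 : (0:ℝ) < (k:ℝ) := by linarith
  have hP : 0 < Real.log k := Real.log_pos hk1
  set P := Real.log (k:ℝ) with hPdef
  set F := nhdsWithin (0:ℝ) (Set.Ioo 0 1) with hF
  set u : ℝ → EReal := fun x => ((g x / eta x : ℝ) : EReal) with hu
  set xn : ℕ → ℝ := fun n => ((k:ℝ)^n)⁻¹ with hxndef
  have hknpos : ∀ n : ℕ, (0:ℝ) < (k:ℝ)^n := fun n => pow_pos hk0 n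
  have hxnpos : ∀ n, 0 < xn n := fun n => inv_pos.mpr (hknpos n)
  have hxnle1 : ∀ n, xn n ≤ 1 := fun n => inv_le_one_of_one_le₀ (one_le_pow₀ hk1.le)
  have hetaxn : ∀ n : ℕ, eta (xn n) = xn n * ((n:ℝ) * P) := by
    intro n
    unfold eta
    rw [hxndef]
    simp only [Real.log_inv, Real.log_pow]
    ring
  have hrxn : ∀ n : ℕ, g (xn n) / eta (xn n) = (g (xn n) / xn n) / ((n:ℝ) * P) := by
    intro n; rw [hetaxn, ← div_div]
  -- easy direction
  have hmap : Tendsto xn atTop F := by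
    rw [hF, tendsto_nhdsWithin_iff]
    constructor
    · have hxe : xn = fun n => ((k:ℝ)⁻¹)^n := by funext n; simp [hxndef, inv_pow]
      rw [hxe]
      exact tendsto_pow_atTop_nhds_zero_of_lt_one (by positivity) (inv_lt_one_of_one_lt₀ hk1)
    · filter_upwards [eventually_ge_atTop 1] with n hn
      refine ⟨hxnpos n, ?_⟩
      have : (1:ℝ) < (k:ℝ)^n := one_lt_pow₀ hk1 (by omega)
      exact inv_lt_one_of_one_lt₀ this
  have hle1 : liminf u F ≤ liminf (fun n => u (xn n)) atTop := by
    have hm : Filter.map xn atTop ≤ F := hmap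
    refine le_trans (Filter.liminf_le_liminf_of_le hm) (le_of_eq ?_)
    rw [Filter.liminf_eq, Filter.liminf_eq]
    congr 1
  -- hard direction
  have hle2 : liminf (fun n => u (xn n)) atTop ≤ liminf u F := by
    by_contra hcon
    push_neg at hcon
    obtain ⟨t, ht1, ht2⟩ := EReal.exists_between_coe_real hcon
    refine absurd ?_ (not_le.mpr ht1)
    have hsuff : ∀ ε : ℝ, 0 < ε → ((t - ε : ℝ):EReal) ≤ liminf u F := by
      intro ε hε
      have hev : ∀ᶠ n : ℕ in atTop, (t:EReal) < u (xn n) :=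
        Filter.eventually_lt_of_lt_liminf ht2
      rw [eventually_atTop] at hev
      obtain ⟨N, hN⟩ := hev
      set N' : ℕ := max (max N 1) ⌈|t|/ε⌉₊ with hN'def
      refine Filter.le_liminf_of_le (by isBoundedDefault) ?_
      rw [hF, eventually_nhdsWithin_iff]
      filter_upwards [eventually_lt_nhds (hxnpos N')] with x hxlt hxIoo
      obtain ⟨hx0, hx1⟩ := hxIoo
      have hxinv1 : 1 < x⁻¹ := (one_lt_inv₀ hx0).mpr hx1
      set y := Real.log x⁻¹ with hydef
      have hy0 : 0 < y := Real.log_pos hxinv1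
      set n : ℕ := ⌊y / P⌋₊ with hndef
      have hnP : (n:ℝ) * P ≤ y := by
        have h := Nat.floor_le (by positivity : (0:ℝ) ≤ y / P)
        have h2 := mul_le_mul_of_nonneg_right h hP.le
        rwa [div_mul_cancel₀ _ hP.ne'] at h2
      have hyP : y < ((n:ℝ)+1) * P := by
        have h := Nat.lt_floor_add_one (y/P)
        have h2 := mul_lt_mul_of_pos_right h hP
        rwa [div_mul_cancel₀ _ hP.ne'] at h2
      have hnN' : N' ≤ n := by
        have h1 : ((k:ℝ))^N' < x⁻¹ := by
          have hxlt' : x < ((k:ℝ)^N')⁻¹ := hxlt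
          have := (inv_lt_inv₀ (by positivity) hx0).mpr hxlt'
          rwa [inv_inv] at this
        have h2 : (N':ℝ) * P < y := by
          have hl := Real.log_lt_log (hknpos N') h1
          rwa [Real.log_pow, ← hPdef, ← hydef] at hl
        have h3 : (N':ℝ) < (n:ℝ) + 1 := by
          by_contra hc
          push_neg at hc
          have : ((n:ℝ)+1) * P ≤ (N':ℝ) * P := mul_le_mul_of_nonneg_right hc hP.le
          linarith
        exact_mod_cast Nat.lt_add_one_iff.mp (by exact_mod_cast h3)
      have hN'1 : 1 ≤ N' := le_trans (le_max_right N 1) (le_max_left _ _)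
      have hn1 : 1 ≤ n := le_trans hN'1 hnN'
      have hnpos : (0:ℝ) < (n:ℝ) := by exact_mod_cast hn1
      have hxle : x ≤ xn n := by
        have h1 : Real.log ((k:ℝ)^n) ≤ Real.log x⁻¹ := by
          rw [Real.log_pow, ← hPdef, ← hydef]; exact hnP
        have h2 : ((k:ℝ))^n ≤ x⁻¹ :=
          (Real.log_le_log_iff (hknpos n) (by positivity)).mp h1
        have h3 := (inv_le_inv₀ (by positivity) (hknpos n)).mpr h2
        rwa [inv_inv] at h3
      have htlt : (t:EReal) < u (xn n) :=
        hN n (le_trans (le_trans (le_max_left N 1) (le_max_left _ _)) hnN')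
      have hnP0 : 0 < (n:ℝ)*P := by positivity
      have htr : t < (g (xn n) / xn n) / ((n:ℝ) * P) := by
        rw [hu] at htlt
        simp only at htlt
        rw [hrxn n] at htlt
        exact_mod_cast htlt
      set q := g x / x with hqdef
      set s := g (xn n) / xn n with hsdef
      have hsq : s ≤ q := concave_ratio hconc h0 hx0 hxle (hxnle1 n)
      have hetax : eta x = x * y := by
        unfold eta; rw [hydef, Real.log_inv]; ring
      have hux : g x / eta x = q / y := by rw [hetax, ← div_div]
      show ((t - ε : ℝ):EReal) ≤ ((g x / eta x : ℝ):EReal)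
      rw [EReal.coe_le_coe_iff, hux]
      rcases le_or_gt 0 q with hq | hq
      · rcases le_or_gt t 0 with ht0 | ht0
        · have : 0 ≤ q / y := div_nonneg hq hy0.le
          linarith
        · have hs0 : 0 < s := by
            by_contra hle
            push_neg at hle
            have : s / ((n:ℝ)*P) ≤ 0 := div_nonpos_of_nonpos_of_nonneg hle hnP0.le
            linarith
          have hn1P0 : 0 < ((n:ℝ)+1)*P := by positivity
          have h1 : q / (((n:ℝ)+1)*P) ≤ q / y := by gcongr
          have h2 : s / (((n:ℝ)+1)*P) ≤ q / (((n:ℝ)+1)*P) := by gcongr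
          have h3 : t * ((n:ℝ)*P) < s := (lt_div_iff₀ hnP0).mp htr
          have h4 : t / ((n:ℝ)+1) ≤ ε := by
            have hceil : |t|/ε ≤ (⌈|t|/ε⌉₊:ℝ) := Nat.le_ceil _
            have hN'ceil : (⌈|t|/ε⌉₊:ℝ) ≤ (N':ℝ) := by
              have : ⌈|t|/ε⌉₊ ≤ N' := by rw [hN'def]; exact le_max_right _ _
              exact_mod_cast this
            have hnN'' : (N':ℝ) ≤ (n:ℝ) := by exact_mod_cast hnN'
            have habs : t ≤ |t| := le_abs_self t
            rw [div_le_iff₀ (by positivity)]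
            have h5 : |t| ≤ ε * (⌈|t|/ε⌉₊:ℝ) := by
              rw [mul_comm, ← div_le_iff₀ hε]
              exact hceil
            have h5b : ε * (⌈|t|/ε⌉₊:ℝ) ≤ ε * (N':ℝ) := mul_le_mul_of_nonneg_left hN'ceil hε.le
            have h5c : ε * (N':ℝ) ≤ ε * (n:ℝ) := mul_le_mul_of_nonneg_left hnN'' hε.le
            have h5d : ε * ((n:ℝ)+1) = ε * (n:ℝ) + ε := by ring
            linarith
          have h6 : t * ((n:ℝ)*P) / (((n:ℝ)+1)*P) ≤ s / (((n:ℝ)+1)*P) := by gcongr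
          have h7 : t * ((n:ℝ)*P) / (((n:ℝ)+1)*P) = t - t/((n:ℝ)+1) := by
            field_simp
            ring
          linarith
      · have h1 : q / ((n:ℝ)*P) ≤ q / y := by
          rw [div_le_div_iff₀ hnP0 hy0]
          exact mul_le_mul_of_nonpos_left hnP hq.le
        have h2 : s / ((n:ℝ)*P) ≤ q / ((n:ℝ)*P) := by gcongr
        linarith
    by_contra hts
    push_neg at hts
    obtain ⟨w, hw1, hw2⟩ := EReal.exists_between_coe_real hts
    have hwt : w < t := by exact_mod_cast hw2
    have h := hsuff (t - w) (by linarith)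
    rw [show t - (t - w) = w by ring] at h
    exact absurd h (not_le.mpr hw1)
  exact le_antisymm hle1 hle2

end Main

theorem liminf_bernoulli_g_entropy (g : ℝ → ℝ)
    (hconc : ConcaveOn ℝ (Set.Icc 0 1) g) (h0 : g 0 = 0)
    (hlim : Filter.Tendsto g (nhdsWithin 0 (Set.Ioi 0)) (nhds 0))
    (k : ℕ) (hk : 2 ≤ k) :
    (∀ C : ℝ,
      Filter.liminf (fun x : ℝ => ((g x / eta x : ℝ) : EReal))
          (nhdsWithin 0 (Set.Ioo 0 1)) = (C : EReal) →
      Filter.liminf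
          (fun n : ℕ => (((1/(n:ℝ)) * ((k:ℝ)^n * g (((k:ℝ)^n)⁻¹)) : ℝ) : EReal))
          Filter.atTop = ((C * Real.log k : ℝ) : EReal)) ∧
    (Filter.liminf (fun x : ℝ => ((g x / eta x : ℝ) : EReal))
          (nhdsWithin 0 (Set.Ioo 0 1)) = ⊤ →
      Filter.liminf
          (fun n : ℕ => (((1/(n:ℝ)) * ((k:ℝ)^n * g (((k:ℝ)^n)⁻¹)) : ℝ) : EReal))
          Filter.atTop = ⊤) := by
  have hk1 : (1:ℝ) < (k:ℝ) := by exact_mod_cast (by omega : 1 < k)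
  have hP : 0 < Real.log k := Real.log_pos hk1
  set P := Real.log (k:ℝ) with hPdef
  have heq := main_liminf_eq hconc h0 hk
  set v : ℕ → ℝ := fun n => g (((k:ℝ)^n)⁻¹) / eta (((k:ℝ)^n)⁻¹) with hv
  have hvP : ∀ n : ℕ, 1 ≤ n → (1/(n:ℝ)) * ((k:ℝ)^n * g (((k:ℝ)^n)⁻¹)) = v n * P := by
    intro n hn
    have hn0 : (0:ℝ) < n := by exact_mod_cast hn
    have hkn : (0:ℝ) < (k:ℝ)^n := pow_pos (by linarith) n
    have hetan : eta (((k:ℝ)^n)⁻¹) = ((k:ℝ)^n)⁻¹ * ((n:ℝ) * P) := by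
      unfold eta; simp only [Real.log_inv, Real.log_pow]; ring
    rw [hv]
    simp only
    rw [hetan]
    field_simp
  have hcongr : Filter.liminf
      (fun n : ℕ => (((1/(n:ℝ)) * ((k:ℝ)^n * g (((k:ℝ)^n)⁻¹)) : ℝ) : EReal)) Filter.atTop
      = Filter.liminf (fun n : ℕ => ((v n * P : ℝ) : EReal)) Filter.atTop := by
    apply Filter.liminf_congr
    filter_upwards [eventually_ge_atTop 1] with n hn
    exact_mod_cast congrArg (fun z : ℝ => (z : EReal)) (hvP n hn)
  constructor
  · intro C hC
    rw [heq] at hC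
    rw [hcongr]
    have hge : ∀ t:ℝ, t < C*P → (t:EReal) ≤ Filter.liminf (fun n => ((v n * P:ℝ):EReal)) atTop := by
      intro t ht
      have hC' : ((C - (C*P - t)/P :ℝ):EReal) < Filter.liminf (fun n => ((v n:ℝ):EReal)) atTop := by
        rw [hC]
        have : C - (C*P - t)/P < C := by
          have : 0 < (C*P - t)/P := div_pos (by linarith) hP
          linarith
        exact_mod_cast this
      have hev := Filter.eventually_lt_of_lt_liminf hC'
      refine Filter.le_liminf_of_le (by isBoundedDefault) ?_
      filter_upwards [hev] with n hn
      have hn' : C - (C*P - t)/P < v n := by exact_mod_cast hn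
      refine EReal.coe_le_coe_iff.mpr ?_
      have := mul_lt_mul_of_pos_right hn' hP
      rw [sub_mul, div_mul_cancel₀ _ hP.ne'] at this
      linarith
    have hle : ∀ t:ℝ, C*P < t → Filter.liminf (fun n => ((v n * P:ℝ):EReal)) atTop ≤ (t:EReal) := by
      intro t ht
      have hC' : Filter.liminf (fun n => ((v n:ℝ):EReal)) atTop < ((C + (t - C*P)/P :ℝ):EReal) := by
        rw [hC]
        have : C < C + (t - C*P)/P := by
          have : 0 < (t - C*P)/P := div_pos (by linarith) hP
          linarith
        exact_mod_cast this
      have hfr := Filter.frequently_lt_of_liminf_lt (by isBoundedDefault) hC'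
      refine Filter.liminf_le_of_frequently_le ?_
      refine hfr.mono ?_
      intro n hn
      have hn' : v n < C + (t - C*P)/P := by exact_mod_cast hn
      refine EReal.coe_le_coe_iff.mpr ?_
      have := mul_lt_mul_of_pos_right hn' hP
      rw [add_mul, div_mul_cancel₀ _ hP.ne'] at this
      linarith
    by_contra hne
    rcases lt_or_gt_of_ne hne with hlt | hgt
    · obtain ⟨w, hw1, hw2⟩ := EReal.exists_between_coe_real hlt
      have hwlt : w < C*P := by exact_mod_cast hw2
      exact absurd (hge w hwlt) (not_le.mpr hw1)
    · obtain ⟨w, hw1, hw2⟩ := EReal.exists_between_coe_real hgt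
      have hwgt : C*P < w := by exact_mod_cast hw1
      exact absurd (hle w hwgt) (not_le.mpr hw2)
  · intro htop
    rw [heq] at htop
    rw [hcongr]
    rw [EReal.eq_top_iff_forall_lt]
    intro yy
    have hb : (((|yy|+1)/P :ℝ):EReal) < Filter.liminf (fun n:ℕ => ((v n:ℝ):EReal)) atTop := by
      rw [htop]; exact EReal.coe_lt_top _
    have hev := Filter.eventually_lt_of_lt_liminf hb
    have hliminf : ((|yy|+1 :ℝ):EReal) ≤ Filter.liminf (fun n => ((v n * P:ℝ):EReal)) atTop := by
      refine Filter.le_liminf_of_le (by isBoundedDefault) ?_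
      filter_upwards [hev] with n hn
      have hn' : (|yy|+1)/P < v n := by exact_mod_cast hn
      refine EReal.coe_le_coe_iff.mpr ?_
      have := mul_lt_mul_of_pos_right hn' hP
      rw [div_mul_cancel₀ _ hP.ne'] at this
      linarith
    refine lt_of_lt_of_le ?_ hliminf
    exact_mod_cast lt_of_le_of_lt (le_abs_self yy) (lt_add_one |yy|)
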